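/- If ζ ∈ ℂ² is a nonzero Majorana spinor, then ζ is an eigenvector of the bilinear-contracted gamma matrices: (X₁(ζ)·σ₁ + X₂(ζ)·σ₂)·ζ = ζ and (Y₁(ζ)·σ₁ + Y₂(ζ)·σ₂)·ζ = (i·σ₃)·ζ. -/

import Mathlib

open Matrix Complex

noncomputable section

/-- Pauli matrix σ₁. -/
def σ1 : Matrix (Fin 2) (Fin 2) ℂ := !![0, 1; 1, 0]
/-- Pauli matrix σ₂. -/
def σ2 : Matrix (Fin 2) (Fin 2) ℂ := !![0, -I; I, 0]
/-- Pauli matrix σ₃. -/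
def σ3 : Matrix (Fin 2) (Fin 2) ℂ := !![1, 0; 0, -1]

/-- A spinor ζ ∈ ℂ² is Majorana if conj(ζ) = i σ₁ ζ componentwise. -/
def IsMajorana (ζ : Fin 2 → ℂ) : Prop := star ζ = (I • σ1).mulVec ζ

/-- The bilinear N(ζ) = ζ†ζ. -/
def Nbil (ζ : Fin 2 → ℂ) : ℂ := star ζ ⬝ᵥ ζ

/-- The bilinear X₁(ζ) = (ζ†σ₁ζ)/N(ζ). -/
def X1 (ζ : Fin 2 → ℂ) : ℂ := (star ζ ⬝ᵥ σ1.mulVec ζ) / Nbil ζ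

/-- The bilinear X₂(ζ) = (ζ†σ₂ζ)/N(ζ). -/
def X2 (ζ : Fin 2 → ℂ) : ℂ := (star ζ ⬝ᵥ σ2.mulVec ζ) / Nbil ζ

/-- Y₁(ζ) = X₂(ζ). -/
def Y1 (ζ : Fin 2 → ℂ) : ℂ := X2 ζ

/-- Y₂(ζ) = −X₁(ζ). -/
def Y2 (ζ : Fin 2 → ℂ) : ℂ := -X1 ζ

/-- A nonzero Majorana spinor ζ is an eigenvector of the bilinear-contracted gamma
matrices: (X₁(ζ)σ₁ + X₂(ζ)σ₂)ζ = ζ and (Y₁(ζ)σ₁ + Y₂(ζ)σ₂)ζ = (iσ₃)ζ = γ₀ζ. -/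
theorem majorana_eigenvector_of_bilinears (ζ : Fin 2 → ℂ) (hζ : ζ ≠ 0)
    (hM : IsMajorana ζ) :
    (X1 ζ • σ1 + X2 ζ • σ2).mulVec ζ = ζ ∧
    (Y1 ζ • σ1 + Y2 ζ • σ2).mulVec ζ = (I • σ3).mulVec ζ := by

  have ha : (starRingEnd ℂ) (ζ 0) = I * ζ 1 := by
    have h := congrFun hM 0
    simpa [σ1, mulVec, dotProduct, Fin.sum_univ_two, Pi.star_apply, mul_comm] using h
  have hb : (starRingEnd ℂ) (ζ 1) = I * ζ 0 := by
    have h := congrFun hM 1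
    simpa [σ1, mulVec, dotProduct, Fin.sum_univ_two, Pi.star_apply, mul_comm] using h
  have h0 : ζ 0 ≠ 0 := by
    intro h
    apply hζ
    have h1 : ζ 1 = 0 := by
      have := ha
      rw [h] at this
      simpa [eq_comm, I_ne_zero] using this.symm
    funext i; fin_cases i <;> simp [h, h1]
  have h1 : ζ 1 ≠ 0 := by
    intro h
    apply h0
    have := hb
    rw [h] at this
    simpa [eq_comm, I_ne_zero] using this.symm
  have hN : Nbil ζ = 2 * I * ζ 0 * ζ 1 := by
    simp [Nbil, dotProduct, Fin.sum_univ_two, Pi.star_apply, ha, hb]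
    ring
  have hNne : Nbil ζ ≠ 0 := by
    rw [hN]
    simp [I_ne_zero, h0, h1]
  constructor <;>
  · funext i
    fin_cases i <;>
    · simp only [X1, X2, Y1, Y2, hN]
      simp only [σ1, σ2, σ3, mulVec, dotProduct, Fin.sum_univ_two, Complex.star_def, ha, hb,
        Matrix.add_apply, Matrix.smul_apply, smul_eq_mul, Matrix.cons_val', Matrix.cons_val_zero,
        Matrix.cons_val_one, Matrix.head_cons, Matrix.empty_val', Matrix.cons_val_fin_one,
        Matrix.head_fin_const, Fin.isValue, Fin.zero_eta, Fin.mk_one, Pi.star_apply]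
      field_simp [h0, h1, I_ne_zero]
      ring_nf
      try simp [show (I:ℂ)^3 = -I by linear_combination I * Complex.I_sq, Complex.I_sq]
      try (simp only [mul_assoc, Complex.I_mul_I]; ring)
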